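/- arXiv:1102.0358 — 2 statements merged into one kernel-verified Lean document; each statement's English description precedes it below -/
import Mathlib

section
/- Let λ₁, λ₂, λ₃, λ₄ be real numbers and v = (v₁, v₂, v₃, v₄) a vector in ℝ⁴ such that for all indices i ≠ j in {1,2,3,4}, v_i · (R - 3λ_j - λ_i) = 0, where R = λ₁ + λ₂ + λ₃ + λ₄. If at least two components of v are nonzero, then λ₁ = λ₂ = λ₃ = λ₄. -/
/-- Key algebraic step in Lemma 2.1: if the eigenvalue system
`v i * (R - 3 λ j - λ i) = 0` holds for all `i ≠ j` (with `R = Σ λ k`)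
and at least two components of `v` are nonzero, then all eigenvalues coincide. -/
theorem eigenvalues_all_equal_of_two_nonzero_components
    (lam v : Fin 4 → ℝ)
    (h : ∀ i j : Fin 4, i ≠ j → v i * ((∑ k, lam k) - 3 * lam j - lam i) = 0)
    (hv : ∃ i j : Fin 4, i ≠ j ∧ v i ≠ 0 ∧ v j ≠ 0) :
    ∀ i j : Fin 4, lam i = lam j := by
  obtain ⟨i, j, hij, hvi, hvj⟩ := hv
  have Hi : ∀ k, k ≠ i → (∑ m, lam m) - 3 * lam k - lam i = 0 := fun k hk =>
    (mul_eq_zero.mp (h i k (fun e => hk e.symm))).resolve_left hvi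
  have Hj : ∀ k, k ≠ j → (∑ m, lam m) - 3 * lam k - lam j = 0 := fun k hk =>
    (mul_eq_zero.mp (h j k (fun e => hk e.symm))).resolve_left hvj
  have hji : lam i = lam j := by
    have h1 := Hi j hij.symm
    have h2 := Hj i hij
    linarith
  have key : ∀ k, lam k = lam i := by
    intro k
    by_cases hk : k = i
    · rw [hk]
    by_cases hk' : k = j
    · rw [hk']; exact hji.symm
    have h1 := Hi k hk
    have h2 := Hi j hij.symm
    have h3 := Hj k hk'
    linarith
  intro a b
  rw [key a, key b]
end

section
/- Let W be a 4-tensor on ℝ⁴ which is antisymmetric in its first two and in its last two arguments, satisfies the pair-symmetry W(x,y,z,w) = W(z,w,x,y), and satisfies the anti-self-duality relations W(e₁,e₂,x,y) = -W(e₃,e₄,x,y), W(e₁,e₃,x,y) = -W(e₄,e₂,x,y), W(e₁,e₄,x,y) = -W(e₂,e₃,x,y) in both index pairs. If W(e₁, e_a, e_b, e_c) = 0 for all a, b, c ∈ {2,3,4}, then W is identically zero. -/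
/-- Lemma 2.3 (multilinear-algebra level): an algebraic Weyl tensor on ℝ⁴ that is
antisymmetric in each index pair, symmetric under exchange of the pairs, and
anti-self-dual in both pairs, vanishes identically as soon as all components
`W(e₁, e_a, e_b, e_c)` with `a, b, c ∈ {2,3,4}` vanish. -/
theorem antiSelfDual_weyl_vanishes
    (W : (Fin 4 → ℝ) → (Fin 4 → ℝ) → (Fin 4 → ℝ) → (Fin 4 → ℝ) → ℝ)
    (e : Fin 4 → (Fin 4 → ℝ)) (he : ∀ i, e i = Pi.single i 1)
    (hanti₁ : ∀ x y z w, W x y z w = - W y x z w)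
    (hanti₂ : ∀ x y z w, W x y z w = - W x y w z)
    (hpair : ∀ x y z w, W x y z w = W z w x y)
    (hd1 : ∀ x y, W (e 0) (e 1) x y = - W (e 2) (e 3) x y)
    (hd2 : ∀ x y, W (e 0) (e 2) x y = - W (e 3) (e 1) x y)
    (hd3 : ∀ x y, W (e 0) (e 3) x y = - W (e 1) (e 2) x y)
    (hd1' : ∀ x y, W x y (e 0) (e 1) = - W x y (e 2) (e 3))
    (hd2' : ∀ x y, W x y (e 0) (e 2) = - W x y (e 3) (e 1))
    (hd3' : ∀ x y, W x y (e 0) (e 3) = - W x y (e 1) (e 2))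
    (h0 : ∀ a b c : Fin 4, a ≠ 0 → b ≠ 0 → c ≠ 0 → W (e 0) (e a) (e b) (e c) = 0) :
    ∀ i j k l : Fin 4, W (e i) (e j) (e k) (e l) = 0 := by
  have diag1 : ∀ x z w, W x x z w = 0 := fun x z w => by
    have := hanti₁ x x z w; linarith
  have diag2 : ∀ x z w, W x w z z = 0 := fun x z w => by
    have := hanti₂ x w z z; linarith
  have fincases : ∀ n : Fin 4, n = 0 ∨ n = 1 ∨ n = 2 ∨ n = 3 := by omega
  have key : ∀ a b c : Fin 4, W (e 0) (e a) (e b) (e c) = 0 := by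
    intro a b c
    by_cases ha : a = 0
    · subst ha; exact diag1 _ _ _
    · have key2 : ∀ d : Fin 4, W (e 0) (e a) (e 0) (e d) = 0 := by
        intro d
        rcases fincases d with h|h|h|h <;> subst h
        · exact diag2 _ _ _
        · rw [hd1' (e 0) (e a), h0 a 2 3 ha (by decide) (by decide)]; ring
        · rw [hd2' (e 0) (e a), h0 a 3 1 ha (by decide) (by decide)]; ring
        · rw [hd3' (e 0) (e a), h0 a 1 2 ha (by decide) (by decide)]; ring
      by_cases hb : b = 0
      · subst hb; exact key2 c
      · by_cases hc : c = 0
        · subst hc; rw [hanti₂, key2 b]; ring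
        · exact h0 a b c ha hb hc
  intro i j k l
  rcases fincases i with hi|hi|hi|hi <;> subst hi <;>
    rcases fincases j with hj|hj|hj|hj <;> subst hj
  · exact key _ _ _
  · exact key _ _ _
  · exact key _ _ _
  · exact key _ _ _
  · rw [hanti₁, key]; ring
  · exact diag1 _ _ _
  · have h := hd3 (e k) (e l); rw [key 3 k l] at h
    linarith
  · have h := hd2 (e k) (e l); rw [key 2 k l] at h
    have hs := hanti₁ (e 3) (e 1) (e k) (e l); linarith
  · rw [hanti₁, key]; ring
  · have h := hd3 (e k) (e l); rw [key 3 k l] at h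
    have hs := hanti₁ (e 1) (e 2) (e k) (e l); linarith
  · exact diag1 _ _ _
  · have h := hd1 (e k) (e l); rw [key 1 k l] at h
    linarith
  · rw [hanti₁, key]; ring
  · have h := hd2 (e k) (e l); rw [key 2 k l] at h
    linarith
  · have h := hd1 (e k) (e l); rw [key 1 k l] at h
    have hs := hanti₁ (e 2) (e 3) (e k) (e l); linarith
  · exact diag1 _ _ _
end
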